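/- Let M be a finite J-trivial monoid and E(M) its set of idempotents. For idempotents e, f ∈ E(M), define e ⋆ f := (e·f)^ω. Then for all e, f ∈ E(M): e ⋆ f ≤_J e, e ⋆ f ≤_J f, and every idempotent z with z ≤_J e and z ≤_J f satisfies z ≤_J e ⋆ f; consequently E(M), partially ordered by the restriction of ≤_J, is a lattice in which the meet of e and f is e ⋆ f, and (E(M), ⋆) is a commutative monoid with identity 1 in which every element is idempotent. -/
import Mathlib


/-- The `J`-preorder on a monoid: `x ≤_J y` iff `x = u * y * v` for some `u, v`. -/
def leJ {M : Type*} [Monoid M] (x y : M) : Prop := ∃ u v : M, x = u * y * v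

/-- A monoid is `J`-trivial if `M x M = M y M` implies `x = y`. -/
def JTrivial (M : Type*) [Monoid M] : Prop :=
  ∀ x y : M, {z : M | ∃ u v : M, z = u * x * v} = {z : M | ∃ u v : M, z = u * y * v} → x = y

open Classical

/-- `x ^ ω`: the unique idempotent among the positive powers of `x`
(in a finite `J`-trivial monoid it exists and is unique). -/
noncomputable def omegaPow {M : Type*} [Monoid M] (x : M) : M :=
  if h : ∃ e : M, IsIdempotentElem e ∧ ∃ n : ℕ, 0 < n ∧ e = x ^ n then h.choose else 1

section Aux

variable {M : Type*} [Monoid M]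

lemma leJ_refl (x : M) : leJ x x := ⟨1, 1, by simp⟩

lemma leJ_trans {x y z : M} (h1 : leJ x y) (h2 : leJ y z) : leJ x z := by
  obtain ⟨u, v, rfl⟩ := h1
  obtain ⟨a, b, rfl⟩ := h2
  exact ⟨u * a, b * v, by simp [mul_assoc]⟩

lemma leJ_antisymm (hJ : JTrivial M) {x y : M} (h1 : leJ x y) (h2 : leJ y x) : x = y := by
  apply hJ
  ext z
  exact ⟨fun hz => leJ_trans hz h1, fun hz => leJ_trans hz h2⟩

lemma leJ_one (x : M) : leJ x 1 := ⟨x, 1, by simp⟩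

/-- In a finite monoid, some positive power of every element is idempotent. -/
lemma exists_idem_pow [Fintype M] (x : M) : ∃ n : ℕ, 0 < n ∧ IsIdempotentElem (x ^ n) := by
  -- find i < j with x ^ i = x ^ j
  obtain ⟨i, j, hij, hpow⟩ : ∃ i j : ℕ, i < j ∧ x ^ i = x ^ j := by
    obtain ⟨a, b, hne, hab⟩ := Finite.exists_ne_map_eq_of_infinite (fun n : ℕ => x ^ n)
    rcases lt_trichotomy a b with h | h | h
    · exact ⟨a, b, h, hab⟩
    · exact absurd h hne
    · exact ⟨b, a, h, hab.symm⟩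
  set d := j - i with hd
  have hdpos : 0 < d := Nat.sub_pos_of_lt hij
  have key : ∀ m : ℕ, i ≤ m → x ^ m = x ^ (m + d) := by
    intro m hm
    have : x ^ m = x ^ i * x ^ (m - i) := by
      rw [← pow_add, Nat.add_sub_cancel' hm]
    rw [this, hpow, ← pow_add]
    congr 1
    omega
  have key2 : ∀ k m : ℕ, i ≤ m → x ^ m = x ^ (m + k * d) := by
    intro k
    induction k with
    | zero => simp
    | succ k ih =>
      intro m hm
      rw [ih m hm, key (m + k * d) (by omega)]
      congr 1
      ring
  refine ⟨(i + 1) * d, by positivity, ?_⟩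
  unfold IsIdempotentElem
  rw [← pow_add]
  have h1 : i ≤ (i + 1) * d := by nlinarith
  have := key2 (i + 1) ((i + 1) * d) h1
  rw [← this]

lemma omegaPow_spec [Fintype M] (x : M) :
    IsIdempotentElem (omegaPow x) ∧ ∃ n : ℕ, 0 < n ∧ omegaPow x = x ^ n := by
  have h : ∃ e : M, IsIdempotentElem e ∧ ∃ n : ℕ, 0 < n ∧ e = x ^ n := by
    obtain ⟨n, hn, hidem⟩ := exists_idem_pow x
    exact ⟨x ^ n, hidem, n, hn, rfl⟩
  rw [omegaPow, dif_pos h]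
  obtain ⟨hidem, n, hn, he⟩ := h.choose_spec
  exact ⟨hidem, n, hn, he⟩

/-- Any idempotent positive power equals `omegaPow x`. -/
lemma omegaPow_eq_pow [Fintype M] {x : M} {m : ℕ} (hm : 0 < m)
    (hidem : IsIdempotentElem (x ^ m)) : omegaPow x = x ^ m := by
  obtain ⟨hq, n, hn, hqe⟩ := omegaPow_spec x
  rw [hqe] at hq ⊢
  calc x ^ n = (x ^ n) ^ m := by
        rcases m with _ | m
        · omega
        · exact (hq.pow_succ_eq m).symm
    _ = (x ^ m) ^ n := by rw [← pow_mul, ← pow_mul, mul_comm]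
    _ = x ^ m := by
        rcases n with _ | n
        · omega
        · exact hidem.pow_succ_eq n

lemma omegaPow_of_idem [Fintype M] {e : M} (he : IsIdempotentElem e) : omegaPow e = e := by
  have := omegaPow_eq_pow (x := e) (m := 1) one_pos (by simpa using he)
  simpa using this

/-- If `x * y` is idempotent then `(x * y) * x = x * y`. -/
lemma mul_idem_right_absorb (hJ : JTrivial M) {x y : M} (h : IsIdempotentElem (x * y)) :
    (x * y) * x = x * y := by
  apply leJ_antisymm hJ
  · exact ⟨1, x, by simp⟩
  · refine ⟨1, y, ?_⟩
    conv_lhs => rw [← h]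
    simp only [one_mul, mul_assoc]

/-- If `x * y` is idempotent then `y * (x * y) = x * y`. -/
lemma mul_idem_left_absorb (hJ : JTrivial M) {x y : M} (h : IsIdempotentElem (x * y)) :
    y * (x * y) = x * y := by
  apply leJ_antisymm hJ
  · exact ⟨y, 1, by simp⟩
  · refine ⟨x, 1, ?_⟩
    conv_lhs => rw [← h]
    simp only [mul_one, mul_assoc]

/-- If `z` is idempotent, `e` is idempotent and `z ≤_J e`, then `e * z = z` and `z * e = z`. -/
lemma idem_absorb (hJ : JTrivial M) {z e : M} (hz : IsIdempotentElem z)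
    (he : IsIdempotentElem e) (h : leJ z e) : e * z = z ∧ z * e = z := by
  obtain ⟨a, b, hab⟩ := h
  have hz1 : a * (e * b) = z := by rw [← mul_assoc, ← hab]
  have hz2 : (a * e) * b = z := hab.symm
  constructor
  · -- use x = a, y = e * b
    have hx : IsIdempotentElem (a * (e * b)) := by rw [hz1]; exact hz
    have h1 : (e * b) * (a * (e * b)) = a * (e * b) := mul_idem_left_absorb hJ hx
    rw [hz1] at h1
    -- h1 : (e * b) * z = z
    calc e * z = e * ((e * b) * z) := by rw [h1]
      _ = ((e * e) * b) * z := by simp only [mul_assoc]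
      _ = (e * b) * z := by rw [he]
      _ = z := h1
  · -- use x = a * e, y = b
    have hx : IsIdempotentElem ((a * e) * b) := by rw [hz2]; exact hz
    have h1 : ((a * e) * b) * (a * e) = (a * e) * b := mul_idem_right_absorb hJ hx
    rw [hz2] at h1
    -- h1 : z * (a * e) = z
    calc z * e = (z * (a * e)) * e := by rw [h1]
      _ = z * (a * (e * e)) := by simp only [mul_assoc]
      _ = z * (a * e) := by rw [he]
      _ = z := h1

/-- The meet property of `omegaPow (e * f)`. -/
lemma meet_spec [Fintype M] (hJ : JTrivial M) {e f : M} (he : IsIdempotentElem e)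
    (hf : IsIdempotentElem f) :
    IsIdempotentElem (omegaPow (e * f)) ∧
    leJ (omegaPow (e * f)) e ∧ leJ (omegaPow (e * f)) f ∧
    (∀ z : M, IsIdempotentElem z → leJ z e → leJ z f → leJ z (omegaPow (e * f))) := by
  obtain ⟨hq, n, hn, hqe⟩ := omegaPow_spec (e * f)
  obtain ⟨m, rfl⟩ : ∃ m, n = m + 1 := ⟨n - 1, by omega⟩
  refine ⟨hq, ?_, ?_, ?_⟩
  · refine ⟨1, f * (e * f) ^ m, ?_⟩
    rw [hqe, pow_succ', one_mul, mul_assoc]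
  · refine ⟨(e * f) ^ m * e, 1, ?_⟩
    rw [hqe, pow_succ, mul_one, mul_assoc]
  · intro z hz hze hzf
    have h1 : e * z = z := (idem_absorb hJ hz he hze).1
    have h2 : f * z = z := (idem_absorb hJ hz hf hzf).1
    have h3 : (e * f) * z = z := by rw [mul_assoc, h2, h1]
    have h4 : ∀ k : ℕ, (e * f) ^ k * z = z := by
      intro k
      induction k with
      | zero => simp
      | succ k ih => rw [pow_succ', mul_assoc, ih, h3]
    exact ⟨1, z, by rw [one_mul, hqe, h4]⟩

/-- Greatest lower bounds of finite sets of idempotents exist. -/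
lemma glb_finset [Fintype M] (hJ : JTrivial M) (S : Finset M)
    (hS : ∀ z ∈ S, IsIdempotentElem z) :
    ∃ m : M, IsIdempotentElem m ∧ (∀ z ∈ S, leJ m z) ∧
      ∀ w : M, IsIdempotentElem w → (∀ z ∈ S, leJ w z) → leJ w m := by
  classical
  revert hS
  induction S using Finset.induction_on with
  | empty => exact fun _ => ⟨1, by simp [IsIdempotentElem], by simp, fun w _ _ => leJ_one w⟩
  | @insert a S ha ih =>
    intro hins
    obtain ⟨m, hm, hmlb, hmglb⟩ := ih (fun z hz => hins z (Finset.mem_insert_of_mem hz))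
    have hA : IsIdempotentElem a := hins a (Finset.mem_insert_self a S)
    obtain ⟨hq, hqa, hqm, hqglb⟩ := meet_spec hJ hA hm
    refine ⟨omegaPow (a * m), hq, ?_, ?_⟩
    · intro z hz
      rcases Finset.mem_insert.mp hz with rfl | hz
      · exact hqa
      · exact leJ_trans hqm (hmlb z hz)
    · intro w hw hwlb
      exact hqglb w hw (hwlb a (Finset.mem_insert_self a S))
        (hmglb w hw (fun z hz => hwlb z (Finset.mem_insert_of_mem hz)))

end Aux

/-- In a finite `J`-trivial monoid `M`, setting `e ⋆ f := (e * f) ^ ω` on the set of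
idempotents: `e ⋆ f` is the meet of `e` and `f` for the restriction of `≤_J`, which makes
the idempotents a lattice (meets and joins exist), and `⋆` is a commutative, associative,
idempotent product with identity `1`. -/
theorem star_meet_lattice_commMonoid {M : Type*} [Monoid M] [Fintype M] (hJ : JTrivial M) :
    -- e ⋆ f is the meet of e and f among idempotents, for ≤_J
    (∀ e f : M, IsIdempotentElem e → IsIdempotentElem f →
      IsIdempotentElem (omegaPow (e * f)) ∧
      leJ (omegaPow (e * f)) e ∧ leJ (omegaPow (e * f)) f ∧
      (∀ z : M, IsIdempotentElem z → leJ z e → leJ z f → leJ z (omegaPow (e * f)))) ∧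
    -- binary joins of idempotents exist (so that the idempotents form a lattice)
    (∀ e f : M, IsIdempotentElem e → IsIdempotentElem f →
      ∃ j : M, IsIdempotentElem j ∧ leJ e j ∧ leJ f j ∧
        (∀ z : M, IsIdempotentElem z → leJ e z → leJ f z → leJ j z)) ∧
    -- (E(M), ⋆) is a commutative idempotent monoid with identity 1
    (∀ e f : M, IsIdempotentElem e → IsIdempotentElem f →
      omegaPow (e * f) = omegaPow (f * e)) ∧
    (∀ e f g : M, IsIdempotentElem e → IsIdempotentElem f → IsIdempotentElem g →
      omegaPow (omegaPow (e * f) * g) = omegaPow (e * omegaPow (f * g))) ∧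
    (∀ e : M, IsIdempotentElem e → omegaPow (e * 1) = e ∧ omegaPow (1 * e) = e) ∧
    (∀ e : M, IsIdempotentElem e → omegaPow (e * e) = e) := by
  classical
  refine ⟨fun e f he hf => meet_spec hJ he hf, ?_, ?_, ?_, ?_, ?_⟩
  · -- joins
    intro e f he hf
    set S : Finset M :=
      Finset.univ.filter (fun z => IsIdempotentElem z ∧ leJ e z ∧ leJ f z) with hSdef
    have hmem : ∀ z : M, z ∈ S ↔ IsIdempotentElem z ∧ leJ e z ∧ leJ f z := by
      intro z; simp [hSdef]
    obtain ⟨j, hjidem, hjlb, hjglb⟩ := glb_finset hJ S (fun z hz => ((hmem z).mp hz).1)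
    refine ⟨j, hjidem, ?_, ?_, ?_⟩
    · exact hjglb e he (fun z hz => ((hmem z).mp hz).2.1)
    · exact hjglb f hf (fun z hz => ((hmem z).mp hz).2.2)
    · intro z hz hez hfz
      exact hjlb z ((hmem z).mpr ⟨hz, hez, hfz⟩)
  · -- commutativity
    intro e f he hf
    obtain ⟨h1, h1e, h1f, h1glb⟩ := meet_spec hJ he hf
    obtain ⟨h2, h2f, h2e, h2glb⟩ := meet_spec hJ hf he
    exact leJ_antisymm hJ (h2glb _ h1 h1f h1e) (h1glb _ h2 h2e h2f)
  · -- associativity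
    intro e f g he hf hg
    obtain ⟨hef, hefe, heff, hefglb⟩ := meet_spec hJ he hf
    obtain ⟨hfg, hfgf, hfgg, hfgglb⟩ := meet_spec hJ hf hg
    obtain ⟨hL, hLef, hLg, hLglb⟩ := meet_spec hJ hef hg
    obtain ⟨hR, hRe, hRfg, hRglb⟩ := meet_spec hJ he hfg
    apply leJ_antisymm hJ
    · exact hRglb _ hL (leJ_trans hLef hefe)
        (hfgglb _ hL (leJ_trans hLef heff) hLg)
    · exact hLglb _ hR (hefglb _ hR hRe (leJ_trans hRfg hfgf))
        (leJ_trans hRfg hfgg)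
  · -- identity
    intro e he
    constructor
    · rw [mul_one]; exact omegaPow_of_idem he
    · rw [one_mul]; exact omegaPow_of_idem he
  · -- idempotence
    intro e he
    rw [he]; exact omegaPow_of_idem he
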